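/- Let Γ be a simple graph on a finite vertex type V and let d ≥ 1. For x ∈ Conf_Γ(ℝ^d) (where ℝ^d = Fin d → ℝ), define ψ_d(x) : V → V → Option (Fin d) by ψ_d(x) v w = some i iff Γ.Adj v w, i is the least index with x v i ≠ x w i, and x v i < x w i (and ψ_d(x) v w = none otherwise). Then ψ_d(x) is a d-weighted acyclic direction of Γ: for every edge {v,w} exactly one of ψ_d(x) v w and ψ_d(x) w v is defined, and the induced directed graph has no directed cycles. -/

import Mathlib

/-- The graphical configuration space `Conf_Γ(X)`: functions `x : V → X` such that
adjacent vertices of `Γ` are sent to distinct points, with the subspace topology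
inherited from the product space `X^V`. -/
abbrev GraphConf {V : Type*} (Γ : SimpleGraph V) (X : Type*) [TopologicalSpace X] : Type _ :=
  {x : V → X // ∀ v w : V, Γ.Adj v w → x v ≠ x w}

/-- A `d`-weighted acyclic direction of a simple graph `Γ`: each edge is directed and
labeled by a weight in `Fin d`, exactly one direction per edge, and there are no
directed cycles (the transitive closure of the directed-edge relation is irreflexive). -/
def IsWeightedAcyclicDirection {V : Type*} (Γ : SimpleGraph V) (d : ℕ)
    (D : V → V → Option (Fin d)) : Prop :=
  (∀ v w, D v w ≠ none → Γ.Adj v w) ∧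
  (∀ v w, Γ.Adj v w → Xor' (D v w ≠ none) (D w v ≠ none)) ∧
  (∀ v, ¬ Relation.TransGen (fun a b => D a b ≠ none) v v)

/-- The weighted direction `ψ_d(x)` associated to a configuration `x : V → ℝ^d`:
`ψ_d(x) v w = some i` iff `v, w` are adjacent, `i` is the least index at which
`x v` and `x w` differ, and `x v i < x w i`; otherwise `ψ_d(x) v w = none`. -/
noncomputable def psiDir {V : Type*} (Γ : SimpleGraph V) (d : ℕ) (x : V → Fin d → ℝ) :
    V → V → Option (Fin d) :=
  open scoped Classical in fun v w =>
    if h : Γ.Adj v w ∧ ∃ i : Fin d, x v i < x w i ∧ ∀ j : Fin d, j < i → x v j = x w j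
    then some h.2.choose else none

/-- For every configuration `x ∈ Conf_Γ(ℝ^d)`, the weighted direction `ψ_d(x)` is a
`d`-weighted acyclic direction of `Γ`: each edge gets exactly one direction and the
resulting directed graph is acyclic. -/
theorem psiDir_isWeightedAcyclicDirection
    {V : Type*} [Fintype V] (Γ : SimpleGraph V) (d : ℕ) (hd : 1 ≤ d)
    (x : GraphConf Γ (Fin d → ℝ)) :
    IsWeightedAcyclicDirection Γ d (psiDir Γ d x.1) := by
  classical
  letI : LinearOrder (Lex (Fin d → ℝ)) :=
    @Pi.Lex.linearOrder (Fin d) (fun _ => ℝ) _ Finite.to_wellFoundedLT _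
  have hD : ∀ a b, psiDir Γ d x.1 a b ≠ none ↔
      Γ.Adj a b ∧ toLex (x.1 a) < toLex (x.1 b) := by
    intro a b
    have hiff : (∃ i : Fin d, x.1 a i < x.1 b i ∧ ∀ j : Fin d, j < i → x.1 a j = x.1 b j) ↔
        toLex (x.1 a) < toLex (x.1 b) := by
      constructor
      · rintro ⟨i, h1, h2⟩; exact ⟨i, h2, h1⟩
      · rintro ⟨i, h2, h1⟩; exact ⟨i, h1, h2⟩
    unfold psiDir
    split_ifs with h
    · simpa [hiff] using ⟨h.1, hiff.mp h.2⟩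
    · simp only [ne_eq, not_true_eq_false, false_iff]
      intro hc
      exact h ⟨hc.1, hiff.mpr hc.2⟩
  refine ⟨fun v w h => ((hD v w).mp h).1, fun v w hadj => ?_, fun v hv => ?_⟩
  · have hne : toLex (x.1 v) ≠ toLex (x.1 w) := by
      simpa using x.2 v w hadj
    rcases lt_or_gt_of_ne hne with h | h
    · exact Or.inl ⟨(hD v w).mpr ⟨hadj, h⟩, fun hc => absurd ((hD w v).mp hc).2 (not_lt.mpr h.le)⟩
    · exact Or.inr ⟨(hD w v).mpr ⟨hadj.symm, h⟩,
        fun hc => absurd ((hD v w).mp hc).2 (not_lt.mpr h.le)⟩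
  · have : toLex (x.1 v) < toLex (x.1 v) := by
      have : ∀ a b, Relation.TransGen (fun a b => psiDir Γ d x.1 a b ≠ none) a b →
          toLex (x.1 a) < toLex (x.1 b) := by
        intro a b hab
        induction hab with
        | single h => exact ((hD _ _).mp h).2
        | tail _ h ih => exact ih.trans ((hD _ _).mp h).2
      exact this v v hv
    exact lt_irrefl _ this
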